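/- Let Γ = (I, {a_ij}) be a generalized tree and let A = (a_ij) be its adjacency matrix, viewed as a real symmetric matrix. If λ is a nondegenerate eigenvalue of A (i.e. there is an eigenvector (r_i)_{i∈I} with A r = λ r and r_i ≠ 0 for all i), then λ has multiplicity 1: the eigenspace {v : A v = λ v} is one-dimensional. -/

import Mathlib

open Finset

/-- A skew-symmetric, divergence-free flow supported on the edges of an acyclic
graph vanishes. -/
theorem flow_zero {I : Type*} [Fintype I] [DecidableEq I]
    (G : SimpleGraph I) (hac : G.IsAcyclic) (F : I → I → ℝ)
    (hskew : ∀ i j, F i j = - F j i)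
    (hsupp : ∀ i j, ¬ G.Adj i j → F i j = 0)
    (hdiv : ∀ i, ∑ j, F i j = 0) :
    ∀ i j, F i j = 0 := by
  classical
  intro i j
  by_cases hadj : G.Adj i j
  · have hb := (SimpleGraph.isAcyclic_iff_forall_adj_isBridge.mp hac) hadj
    rw [SimpleGraph.isBridge_iff] at hb
    set G' : SimpleGraph I := G \ SimpleGraph.fromEdgeSet {s(i, j)} with hG'
    have hnr : ¬ G'.Reachable i j := hb
    set S : Finset I := Finset.univ.filter (fun k => G'.Reachable j k) with hS
    have hjS : j ∈ S :=
      Finset.mem_filter.mpr ⟨Finset.mem_univ _, SimpleGraph.Reachable.refl j⟩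
    have hiS : i ∉ S := by
      simp only [hS, Finset.mem_filter, Finset.mem_univ, true_and]
      intro h
      exact hnr h.symm
    -- crossing edges
    have hcross : ∀ k ∈ S, ∀ m ∉ S, F k m ≠ 0 → k = j ∧ m = i := by
      intro k hk m hm hF
      have hadjkm : G.Adj k m := by
        by_contra hc
        exact hF (hsupp _ _ hc)
      have hG'n : ¬ G'.Adj k m := by
        intro hc
        apply hm
        simp only [hS, Finset.mem_filter, Finset.mem_univ, true_and] at hk ⊢
        exact hk.trans ⟨SimpleGraph.Walk.cons hc SimpleGraph.Walk.nil⟩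
      have : s(k, m) = s(i, j) := by
        by_contra hne
        apply hG'n
        rw [hG', SimpleGraph.sdiff_adj]
        refine ⟨hadjkm, ?_⟩
        rw [SimpleGraph.fromEdgeSet_adj]
        rintro ⟨h1, -⟩
        exact hne (by simpa using h1)
      rw [Sym2.eq_iff] at this
      rcases this with ⟨rfl, rfl⟩ | ⟨rfl, rfl⟩
      · exact absurd hk hiS
      · exact ⟨rfl, rfl⟩
    have hsum0 : ∑ k ∈ S, ∑ m, F k m = 0 := by
      exact Finset.sum_eq_zero fun k _ => hdiv k
    have hsplit : ∀ k, ∑ m, F k m = ∑ m ∈ S, F k m + ∑ m ∈ Sᶜ, F k m := by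
      intro k
      rw [Finset.sum_add_sum_compl]
    have hSS : ∑ k ∈ S, ∑ m ∈ S, F k m = 0 := by
      have h2 : ∑ k ∈ S, ∑ m ∈ S, F m k = ∑ k ∈ S, ∑ m ∈ S, F k m := Finset.sum_comm
      have h1 : ∑ k ∈ S, ∑ m ∈ S, F k m = ∑ k ∈ S, ∑ m ∈ S, (- F m k) :=
        Finset.sum_congr rfl fun k _ => Finset.sum_congr rfl fun m _ => hskew k m
      have h3 : ∑ k ∈ S, ∑ m ∈ S, (- F m k) = - ∑ k ∈ S, ∑ m ∈ S, F m k := by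
        simp
      linarith
    have hrest : ∑ k ∈ S, ∑ m ∈ Sᶜ, F k m = F j i := by
      have : ∀ k ∈ S, ∀ m ∈ Sᶜ, F k m = if k = j ∧ m = i then F j i else 0 := by
        intro k hk m hm
        by_cases h : F k m = 0
        · rw [h]
          split
          · rcases ‹k = j ∧ m = i› with ⟨rfl, rfl⟩
            exact h.symm
          · rfl
        · obtain ⟨rfl, rfl⟩ := hcross k hk m (Finset.mem_compl.mp hm) h
          simp
      calc ∑ k ∈ S, ∑ m ∈ Sᶜ, F k m
          = ∑ k ∈ S, ∑ m ∈ Sᶜ, (if k = j ∧ m = i then F j i else 0) :=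
            Finset.sum_congr rfl fun k hk => Finset.sum_congr rfl fun m hm => this k hk m hm
        _ = F j i := by
            rw [Finset.sum_eq_single j]
            · rw [Finset.sum_eq_single i]
              · simp
              · intro m _ hmi; simp [hmi]
              · intro h; exact absurd (Finset.mem_compl.mpr hiS) h
            · intro k _ hkj
              apply Finset.sum_eq_zero
              intro m _
              simp [hkj]
            · intro h; exact absurd hjS h
    have : F j i = 0 := by
      have := hsum0
      simp_rw [hsplit] at this
      rw [Finset.sum_add_distrib, hSS, hrest] at this
      linarith
    rw [hskew, this, neg_zero]
  · exact hsupp i j hadj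

/-- If `Γ = (I, a)` is a generalized tree (symmetric `a : I × I → ℕ` with
`a i j ≤ 1`, whose underlying simple graph — edges between `i ≠ j` with `a i j = 1` — is a
tree) and `λ` is a nondegenerate eigenvalue of the adjacency matrix `A` (i.e. it admits a
real eigenvector all of whose coordinates are nonzero), then the `λ`-eigenspace of `A` is
one-dimensional. -/
theorem stmt_1 {I : Type*} [Fintype I] [Nonempty I] [DecidableEq I]
    (a : I → I → ℕ) (hsymm : ∀ i j, a i j = a j i) (hle : ∀ i j, a i j ≤ 1)
    (G : SimpleGraph I) (hG : ∀ i j, G.Adj i j ↔ i ≠ j ∧ a i j = 1)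
    (htree : G.IsTree)
    (A : Matrix I I ℝ) (hA : ∀ i j, A i j = (a i j : ℝ))
    (lam : ℝ) (r : I → ℝ) (hr : A.mulVec r = lam • r) (hr0 : ∀ i, r i ≠ 0) :
    Module.finrank ℝ (Module.End.eigenspace (Matrix.toLin' A) lam) = 1 := by
  classical
  -- the key proportionality fact for any eigenvector
  have key : ∀ w : I → ℝ, A.mulVec w = lam • w →
      ∀ u v : I, w u * r v = w v * r u := by
    intro w hw
    set F : I → I → ℝ := fun k m => A k m * (r k * w m - w k * r m) with hF
    have hskew : ∀ k m, F k m = - F m k := by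
      intro k m
      simp only [hF, hA, hsymm k m]
      ring
    have hsupp : ∀ k m, ¬ G.Adj k m → F k m = 0 := by
      intro k m hadj
      rcases eq_or_ne k m with rfl | hne
      · simp only [hF]; ring
      · have : a k m = 0 := by
          rcases Nat.lt_or_ge (a k m) 1 with h | h
          · omega
          · exact absurd ((hG k m).mpr ⟨hne, le_antisymm (hle k m) h⟩) hadj
        simp [hF, hA, this]
    have hdiv : ∀ k, ∑ m, F k m = 0 := by
      intro k
      have h1 : ∑ m, A k m * w m = lam * w k := by
        have := congrFun hw k
        simpa [Matrix.mulVec, dotProduct] using this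
      have h2 : ∑ m, A k m * r m = lam * r k := by
        have := congrFun hr k
        simpa [Matrix.mulVec, dotProduct] using this
      have : ∑ m, F k m = r k * (∑ m, A k m * w m) - w k * (∑ m, A k m * r m) := by
        rw [Finset.mul_sum, Finset.mul_sum, ← Finset.sum_sub_distrib]
        exact Finset.sum_congr rfl fun m _ => by simp [hF]; ring
      rw [this, h1, h2]; ring
    have hFzero : ∀ k m, F k m = 0 := flow_zero G htree.IsAcyclic F hskew hsupp hdiv
    have hedge : ∀ k m, G.Adj k m → r k * w m = w k * r m := by
      intro k m hadj
      have h1 : a k m = 1 := ((hG k m).mp hadj).2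
      have := hFzero k m
      simp only [hF, hA, h1, Nat.cast_one, one_mul] at this
      linarith
    -- propagate along walks
    have hwalk : ∀ u v : I, G.Walk u v → w u * r v = w v * r u := by
      intro u v p
      induction p with
      | nil => ring
      | cons h q ih =>
        rename_i x b c
        have e1 := hedge x b h
        apply mul_right_cancel₀ (hr0 b)
        linear_combination r x * ih - r c * e1
    intro u v
    exact hwalk u v (htree.isConnected.preconnected u v).some
  -- r is an eigenvector
  have hrmem : r ∈ Module.End.eigenspace (Matrix.toLin' A) lam := by
    rw [Module.End.mem_eigenspace_iff, Matrix.toLin'_apply]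
    exact hr
  have i0 : I := Classical.arbitrary I
  apply finrank_eq_one (⟨r, hrmem⟩ : Module.End.eigenspace (Matrix.toLin' A) lam)
  · intro h
    have : r = 0 := congrArg Subtype.val h
    exact hr0 i0 (by rw [this]; rfl)
  · rintro ⟨w, hwmem⟩
    rw [Module.End.mem_eigenspace_iff, Matrix.toLin'_apply] at hwmem
    refine ⟨w i0 / r i0, ?_⟩
    ext k
    show (w i0 / r i0) * r k = w k
    have := key w hwmem k i0
    rw [div_mul_eq_mul_div, div_eq_iff (hr0 i0)]
    linarith
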